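/- arXiv:math/0309457 — 4 statements merged into one kernel-verified Lean document; each statement's English description precedes it below -/
import Mathlib

section
/- Let ξ be a real random variable on a probability space such that e^ξ and e^{2ξ} are integrable, let m = E[e^ξ], d = Var(e^ξ) with d > 0, let ρ > 0, and let s > 0. Suppose V : (0,∞) → ℝ is measurable and V(s·e^ξ) is square-integrable. Set Δ = Cov(V(s·e^ξ), e^ξ)/(s·d) and define the kernel g : ℝ → ℝ by g(x) = (e^x − m)·(1 − ρ·m)/d + ρ. Then ρ·(E[V(s·e^ξ)] − Δ·s·m) + Δ·s = E[V(s·e^ξ)·g(ξ)]. In other words, the Black–Scholes pricing rule E[Π̃] = e^{rτ}·Π (with ρ = e^{−rτ}) applied to the variance-minimal hedged portfolio is equivalent to the integral equation V_{k+1}(s) = E[V_k(s·e^ξ)·g(ξ)]. -/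
open MeasureTheory ProbabilityTheory Real

/-- The Black–Scholes pricing rule `E[Π̃] = e^{rτ}·Π` (i.e. `ρ·E[Π̃] = Π` with
`ρ = e^{-rτ}`) applied to the variance-minimal hedged portfolio is equivalent to
the integral equation `V_{k+1}(s) = E[V_k(s·e^ξ)·g(ξ)]`. -/
theorem pricing_rule_eq_integral_equation {Ω : Type*} [MeasurableSpace Ω]
    (P : Measure Ω) [IsProbabilityMeasure P]
    (ξ : Ω → ℝ) (hξ : Measurable ξ)
    (hint1 : Integrable (fun ω => exp (ξ ω)) P)
    (hint2 : Integrable (fun ω => exp (2 * ξ ω)) P)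
    (m d : ℝ) (hm : m = ∫ ω, exp (ξ ω) ∂P)
    (hd : d = variance (fun ω => exp (ξ ω)) P) (hd0 : 0 < d)
    (ρ : ℝ) (hρ : 0 < ρ) (s : ℝ) (hs : 0 < s)
    (V : ℝ → ℝ) (hV : Measurable V)
    (hV2 : MemLp (fun ω => V (s * exp (ξ ω))) 2 P)
    (Δ : ℝ)
    (hΔ : Δ = (∫ ω, (V (s * exp (ξ ω)) - ∫ ω', V (s * exp (ξ ω')) ∂P) *
                (exp (ξ ω) - ∫ ω', exp (ξ ω') ∂P) ∂P) / (s * d))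
    (g : ℝ → ℝ) (hg : g = fun x => (exp x - m) * (1 - ρ * m) / d + ρ) :
    ρ * ((∫ ω, V (s * exp (ξ ω)) ∂P) - Δ * s * m) + Δ * s
      = ∫ ω, V (s * exp (ξ ω)) * g (ξ ω) ∂P := by
  set X : Ω → ℝ := fun ω => V (s * exp (ξ ω)) with hX
  set Y : Ω → ℝ := fun ω => exp (ξ ω) with hY
  have hYm : MemLp Y 2 P := by
    rw [memLp_two_iff_integrable_sq (hξ.exp.aestronglyMeasurable)]
    convert hint2 using 2 with ω
    simp [hY, two_mul, exp_add, sq]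
  have hXint : Integrable X P := hV2.integrable one_le_two
  have hYint : Integrable Y P := hint1
  have hXY : Integrable (fun ω => X ω * Y ω) P := by
    refine Integrable.mono' (hV2.integrable_sq.add hYm.integrable_sq)
      (hV2.aestronglyMeasurable.mul hYm.aestronglyMeasurable) (Filter.Eventually.of_forall ?_)
    intro ω
    simp only [Pi.add_apply, Real.norm_eq_abs, abs_mul]
    nlinarith [sq_nonneg (|X ω| - |Y ω|), sq_abs (X ω), sq_abs (Y ω)]
  set EX : ℝ := ∫ ω, X ω ∂P with hEX
  have hcov : ∫ ω, (X ω - EX) * (Y ω - m) ∂P = (∫ ω, X ω * Y ω ∂P) - EX * m := by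
    have : (fun ω => (X ω - EX) * (Y ω - m))
        = fun ω => (X ω * Y ω - EX * Y ω - m * X ω) + EX * m := by
      funext ω; ring
    have i1 : Integrable (fun ω => X ω * Y ω - EX * Y ω) P := hXY.sub (hYint.const_mul EX)
    have i2 : Integrable (fun ω => X ω * Y ω - EX * Y ω - m * X ω) P := i1.sub (hXint.const_mul m)
    rw [this, integral_add i2 (integrable_const _), integral_sub i1 (hXint.const_mul m),
      integral_sub hXY (hYint.const_mul EX), integral_const_mul, integral_const_mul,
      integral_const]
    simp only [measure_univ, probReal_univ, ENNReal.toReal_one, smul_eq_mul, one_mul]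
    rw [← hm, ← hEX]
    ring
  have hrhs : ∫ ω, X ω * g (ξ ω) ∂P
      = (∫ ω, X ω * Y ω ∂P) * ((1 - ρ * m) / d) + EX * (ρ - m * ((1 - ρ * m) / d)) := by
    have : (fun ω => X ω * g (ξ ω))
        = fun ω => X ω * Y ω * ((1 - ρ * m) / d) + X ω * (ρ - m * ((1 - ρ * m) / d)) := by
      funext ω; rw [hg]; simp only [hY]; field_simp; ring
    rw [this, integral_add (hXY.mul_const _) (hXint.mul_const _), integral_mul_const,
      integral_mul_const]
  have hΔ' : Δ = ((∫ ω, X ω * Y ω ∂P) - EX * m) / (s * d) := by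
    rw [hΔ, ← hm]
    exact congrArg (· / (s * d)) hcov
  have hΔs : Δ * s = ((∫ ω, X ω * Y ω ∂P) - EX * m) / d := by
    rw [hΔ']
    field_simp
  rw [hrhs]
  rw [show ρ * (EX - Δ * s * m) + Δ * s = ρ * EX + Δ * s * (1 - ρ * m) by ring, hΔs]
  field_simp
  ring
end

section
/- Let m > 0, d > 0, and ρ > 0 be real numbers, and define g : ℝ → ℝ by g(x) = (e^x − m)·(1 − ρ·m)/d + ρ. Then g(x) ≥ 0 for all x ∈ ℝ if and only if both ρ·m ≤ 1 and ρ·(d + m²) ≥ m. Equivalently, with ρ = e^{−rτ}, m = E[e^ξ], and d + m² = E[e^{2ξ}], the kernel g is nonnegative on ℝ if and only if (1/τ)·ln(E[e^ξ]) ≤ r ≤ (1/τ)·ln(E[e^{2ξ}]/E[e^ξ]). -/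
open Real

/-- The hedging kernel `g(x) = (e^x − m)(1 − ρm)/d + ρ` is nonnegative on all
of `ℝ` iff `ρm ≤ 1` and `ρ(d + m²) ≥ m`; equivalently, with `ρ = e^{−rτ}`,
`m = E[e^ξ]`, `d + m² = E[e^{2ξ}]`, iff
`(1/τ)·ln E[e^ξ] ≤ r ≤ (1/τ)·ln(E[e^{2ξ}]/E[e^ξ])`. -/
theorem kernel_nonneg_iff (m d ρ r τ : ℝ) (hm : 0 < m) (hd : 0 < d)
    (hτ : 0 < τ) (hρ : ρ = exp (-(r * τ)))
    (g : ℝ → ℝ) (hg : g = fun x => (exp x - m) * (1 - ρ * m) / d + ρ) :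
    ((∀ x : ℝ, 0 ≤ g x) ↔ (ρ * m ≤ 1 ∧ m ≤ ρ * (d + m ^ 2))) ∧
      ((∀ x : ℝ, 0 ≤ g x) ↔
        ((1 / τ) * log m ≤ r ∧ r ≤ (1 / τ) * log ((d + m ^ 2) / m))) := by
  subst hg
  have hρ0 : 0 < ρ := hρ ▸ exp_pos _
  have key : (∀ x : ℝ, 0 ≤ (exp x - m) * (1 - ρ * m) / d + ρ) ↔
      (ρ * m ≤ 1 ∧ m ≤ ρ * (d + m ^ 2)) := by
    constructor
    · intro h
      have h1 : ρ * m ≤ 1 := by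
        by_contra hc
        push_neg at hc
        have hcneg : (1 - ρ * m) / d < 0 :=
          div_neg_of_neg_of_pos (by linarith) hd
        set c := (1 - ρ * m) / d with hcdef
        have hnc : (0:ℝ) < -c := neg_pos.mpr hcneg
        have ht : (0:ℝ) < m + ρ / (-c) + 1 := by
          have := div_pos hρ0 hnc; linarith
        have h2 := h (Real.log (m + ρ / (-c) + 1))
        rw [Real.exp_log ht] at h2
        have h2' : 0 ≤ (m + ρ / -c + 1 - m) * c + ρ := by
          rw [hcdef, ← mul_div_assoc]; exact h2
        clear h2
        have hcne : c ≠ 0 := ne_of_lt hcneg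
        have hmul : ρ / (-c) * c = -ρ := by
          rw [div_mul_eq_mul_div, div_neg, mul_div_cancel_right₀ _ hcne]
        nlinarith [h2', hmul]
      refine ⟨h1, ?_⟩
      have hc0 : 0 ≤ (1 - ρ * m) / d := div_nonneg (by linarith) hd.le
      set c := (1 - ρ * m) / d with hcdef
      by_contra hc
      push_neg at hc
      -- so m > ρ (d + m²), i.e. ρ - m*c < 0
      have hkey : ρ - m * c < 0 := by
        rw [hcdef]
        have h0 : (ρ * d - m * (1 - ρ * m)) / d < 0 :=
          div_neg_of_neg_of_pos (by nlinarith) hd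
        calc ρ - m * ((1 - ρ * m) / d) = (ρ * d - m * (1 - ρ * m)) / d := by
              field_simp
          _ < 0 := h0
      have hcpos : 0 < c := by
        rcases lt_or_eq_of_le hc0 with h' | h'
        · exact h'
        · exfalso; rw [← h'] at hkey; nlinarith
      have hε : (0:ℝ) < (m * c - ρ) / (2 * c) := by
        apply div_pos (by linarith) (by linarith)
      have h2 := h (Real.log ((m * c - ρ) / (2 * c)))
      rw [Real.exp_log hε] at h2
      have h2' : 0 ≤ ((m * c - ρ) / (2 * c) - m) * c + ρ := by
        rw [hcdef, ← mul_div_assoc]; exact h2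
      have hcc : ((m * c - ρ) / (2 * c)) * c = (m * c - ρ) / 2 := by
        field_simp
      nlinarith [h2', hcc]
    · rintro ⟨h1, h2⟩ x
      have he := exp_pos x
      have hnum : 0 ≤ (exp x - m) * (1 - ρ * m) + ρ * d := by
        nlinarith [mul_nonneg he.le (by linarith : (0:ℝ) ≤ 1 - ρ * m)]
      have : 0 ≤ ((exp x - m) * (1 - ρ * m) + ρ * d) / d :=
        div_nonneg hnum hd.le
      calc (0:ℝ) ≤ ((exp x - m) * (1 - ρ * m) + ρ * d) / d := this
        _ = (exp x - m) * (1 - ρ * m) / d + ρ := by field_simp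
  refine ⟨key, key.trans ?_⟩
  have hdm : 0 < d + m ^ 2 := by positivity
  have e1 : ρ * m ≤ 1 ↔ (1 / τ) * log m ≤ r := by
    constructor
    · intro h
      have hme : m ≤ exp (r * τ) := by
        have := mul_le_mul_of_nonneg_left h (exp_pos (r * τ)).le
        rw [hρ] at this
        rw [← mul_assoc, ← Real.exp_add] at this
        simp at this
        linarith
      have : log m ≤ r * τ := by
        calc log m ≤ log (exp (r * τ)) := Real.log_le_log hm hme
          _ = r * τ := Real.log_exp _
      rw [one_div, inv_mul_le_iff₀ hτ]
      linarith [this]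
    · intro h
      rw [one_div, inv_mul_le_iff₀ hτ] at h
      have hme : m ≤ exp (r * τ) := by
        calc m = exp (log m) := (Real.exp_log hm).symm
          _ ≤ exp (r * τ) := Real.exp_le_exp.mpr (by linarith)
      rw [hρ, Real.exp_neg]
      rw [inv_mul_le_iff₀ (exp_pos _), mul_one]
      exact hme
  have e2 : m ≤ ρ * (d + m ^ 2) ↔ r ≤ (1 / τ) * log ((d + m ^ 2) / m) := by
    have hlog : log ((d + m ^ 2) / m) = log (d + m ^ 2) - log m :=
      Real.log_div (ne_of_gt hdm) (ne_of_gt hm)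
    constructor
    · intro h
      have hdiv : m / (d + m ^ 2) ≤ ρ := by
        rw [div_le_iff₀ hdm]; linarith [h]
      have : log (m / (d + m ^ 2)) ≤ -(r * τ) := by
        calc log (m / (d + m ^ 2)) ≤ log ρ :=
              Real.log_le_log (div_pos hm hdm) hdiv
          _ = -(r * τ) := by rw [hρ, Real.log_exp]
      rw [Real.log_div (ne_of_gt hm) (ne_of_gt hdm)] at this
      rw [one_div, inv_mul_eq_div, le_div_iff₀ hτ, hlog]
      nlinarith [this]
    · intro h
      rw [one_div, inv_mul_eq_div, le_div_iff₀ hτ, hlog] at h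
      have h' : log (m / (d + m ^ 2)) ≤ -(r * τ) := by
        rw [Real.log_div (ne_of_gt hm) (ne_of_gt hdm)]
        nlinarith [h]
      have : m / (d + m ^ 2) ≤ ρ := by
        calc m / (d + m ^ 2) = exp (log (m / (d + m ^ 2))) :=
              (Real.exp_log (div_pos hm hdm)).symm
          _ ≤ exp (-(r * τ)) := Real.exp_le_exp.mpr h'
          _ = ρ := hρ.symm
      rw [div_le_iff₀ hdm] at this
      linarith
  exact and_congr e1 e2
end

section
/- Let ξ be a Gaussian random variable with mean μ·τ and variance σ²·τ (σ > 0, τ > 0), set m = e^{μτ + σ²τ/2}, d = e^{2μτ + σ²τ}·(e^{σ²τ} − 1), ρ = e^{−rτ} with r ∈ ℝ, and define g : ℝ → ℝ by g(x) = (e^x − m)·(1 − ρ·m)/d + ρ. Set M₁ = e^{−rτ} + (e^{(μ−r)τ + σ²τ/2} − 1)/(e^{μτ + (3/2)σ²τ} − e^{μτ + σ²τ/2}) and M₂ = (1 − e^{(μ−r)τ + σ²τ/2})/(e^{μτ + (3/2)σ²τ} − e^{μτ + σ²τ/2}). Then for every real p, E[e^{p·ξ}·g(ξ)] = e^{μτ·p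 + σ²τ·p²/2}·(M₁ + M₂·e^{p·σ²τ}). -/
open MeasureTheory ProbabilityTheory Real
open scoped NNReal ENNReal

lemma gaussianPDFReal_mul_exp (a p : ℝ) {v : ℝ≥0} (hv : v ≠ 0) (x : ℝ) :
    gaussianPDFReal a v x * exp (p * x)
      = exp (a * p + v * p ^ 2 / 2) * gaussianPDFReal (a + v * p) v x := by
  have hv' : (v : ℝ) ≠ 0 := by exact_mod_cast hv
  have hv' : (v : ℝ) ≠ 0 := by exact_mod_cast hv
  have h : -(x - a) ^ 2 / (2 * (v:ℝ)) + p * x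
      = (a * p + (v:ℝ) * p ^ 2 / 2) + -(x - (a + (v:ℝ) * p)) ^ 2 / (2 * (v:ℝ)) := by
    field_simp
    ring
  simp only [gaussianPDFReal]
  rw [mul_assoc, ← Real.exp_add, h, Real.exp_add]
  ring

lemma exp_mul_gaussian_fun_eq (a p : ℝ) {v : ℝ≥0} (hv : v ≠ 0) :
    (fun x => gaussianPDFReal a v x * exp (p * x))
      = fun x => exp (a * p + v * p ^ 2 / 2) * gaussianPDFReal (a + v * p) v x :=
  funext fun x => gaussianPDFReal_mul_exp a p hv x

lemma integrable_exp_mul_gaussianReal (a p : ℝ) {v : ℝ≥0} (hv : v ≠ 0) :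
    Integrable (fun x => exp (p * x)) (gaussianReal a v) := by
  rw [gaussianReal_of_var_ne_zero _ hv, gaussianPDF_def]
  have hmeas : Measurable fun x => (gaussianPDFReal a v x).toNNReal :=
    (measurable_gaussianPDFReal a v).real_toNNReal
  rw [show (fun x => ENNReal.ofReal (gaussianPDFReal a v x))
      = fun x => ((gaussianPDFReal a v x).toNNReal : ℝ≥0∞) from rfl,
    integrable_withDensity_iff_integrable_smul hmeas]
  have : (fun x => ((gaussianPDFReal a v x).toNNReal : ℝ≥0) • exp (p * x))
      = fun x => exp (a * p + v * p ^ 2 / 2) * gaussianPDFReal (a + v * p) v x := by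
    funext x
    rw [NNReal.smul_def, smul_eq_mul, Real.coe_toNNReal _ (gaussianPDFReal_nonneg a v x),
      gaussianPDFReal_mul_exp a p hv x]
  rw [this]
  exact (integrable_gaussianPDFReal _ _).const_mul _

lemma integral_exp_mul_gaussianReal (a p : ℝ) {v : ℝ≥0} (hv : v ≠ 0) :
    ∫ x, exp (p * x) ∂(gaussianReal a v) = exp (a * p + v * p ^ 2 / 2) := by
  rw [gaussianReal_of_var_ne_zero _ hv, gaussianPDF_def]
  have hmeas : Measurable fun x => (gaussianPDFReal a v x).toNNReal :=
    (measurable_gaussianPDFReal a v).real_toNNReal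
  rw [show (fun x => ENNReal.ofReal (gaussianPDFReal a v x))
      = fun x => ((gaussianPDFReal a v x).toNNReal : ℝ≥0∞) from rfl,
    integral_withDensity_eq_integral_smul hmeas]
  have : (fun x => ((gaussianPDFReal a v x).toNNReal : ℝ≥0) • exp (p * x))
      = fun x => exp (a * p + v * p ^ 2 / 2) * gaussianPDFReal (a + v * p) v x := by
    funext x
    rw [NNReal.smul_def, smul_eq_mul, Real.coe_toNNReal _ (gaussianPDFReal_nonneg a v x),
      gaussianPDFReal_mul_exp a p hv x]
  rw [this, integral_const_mul, integral_gaussianPDFReal_eq_one _ hv, mul_one]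

/-- Explicit formula for `U(p) = E[e^{pξ}·g(ξ)]` in the lognormal example:
`U(p) = e^{μτp + σ²τp²/2}·(M₁ + M₂·e^{pσ²τ})`. -/
theorem lognormal_kernel_mellin {Ω : Type*} [MeasurableSpace Ω]
    (P : Measure Ω) [IsProbabilityMeasure P]
    (ξ : Ω → ℝ) (hξ : Measurable ξ)
    (μ σ τ r : ℝ) (hσ : 0 < σ) (hτ : 0 < τ)
    (hgauss : Measure.map ξ P = gaussianReal (μ * τ) (Real.toNNReal (σ ^ 2 * τ)))
    (m d ρ : ℝ)
    (hm : m = exp (μ * τ + σ ^ 2 * τ / 2))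
    (hd : d = exp (2 * μ * τ + σ ^ 2 * τ) * (exp (σ ^ 2 * τ) - 1))
    (hρ : ρ = exp (-(r * τ)))
    (g : ℝ → ℝ) (hg : g = fun x => (exp x - m) * (1 - ρ * m) / d + ρ)
    (M₁ M₂ : ℝ)
    (hM₁ : M₁ = exp (-(r * τ)) + (exp ((μ - r) * τ + σ ^ 2 * τ / 2) - 1) /
        (exp (μ * τ + (3 / 2) * σ ^ 2 * τ) - exp (μ * τ + σ ^ 2 * τ / 2)))
    (hM₂ : M₂ = (1 - exp ((μ - r) * τ + σ ^ 2 * τ / 2)) /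
        (exp (μ * τ + (3 / 2) * σ ^ 2 * τ) - exp (μ * τ + σ ^ 2 * τ / 2))) :
    ∀ p : ℝ, (∫ ω, exp (p * ξ ω) * g (ξ ω) ∂P)
      = exp (μ * τ * p + σ ^ 2 * τ * p ^ 2 / 2) * (M₁ + M₂ * exp (p * σ ^ 2 * τ)) := by
  intro p
  have hVpos : 0 < σ ^ 2 * τ := by positivity
  set v : ℝ≥0 := Real.toNNReal (σ ^ 2 * τ) with hvdef
  have hv : v ≠ 0 := by
    simp [hvdef, Real.toNNReal_eq_zero, not_le, hVpos]
  have hvc : (v : ℝ) = σ ^ 2 * τ := Real.coe_toNNReal _ hVpos.le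
  -- constants
  set A : ℝ := (1 - ρ * m) / d with hA
  set D : ℝ := exp (μ * τ + (3 / 2) * σ ^ 2 * τ) - exp (μ * τ + σ ^ 2 * τ / 2) with hDdef
  have hD : D ≠ 0 := by
    rw [hDdef, sub_ne_zero]
    intro h
    have := Real.exp_injective h
    nlinarith
  have hdD : d = m * D := by
    rw [hDdef, hd, hm, mul_sub, mul_sub, mul_one, ← Real.exp_add, ← Real.exp_add,
      ← Real.exp_add]
    ring_nf
  have hm0 : m ≠ 0 := by rw [hm]; exact Real.exp_ne_zero _
  have hd0 : d ≠ 0 := by rw [hdD]; exact mul_ne_zero hm0 hD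
  have hρm : exp ((μ - r) * τ + σ ^ 2 * τ / 2) = ρ * m := by
    rw [hρ, hm, ← Real.exp_add]; congr 1; ring
  -- change of variables to the Gaussian measure
  have hgmeas : Continuous g := by rw [hg]; continuity
  have hint : ∫ ω, exp (p * ξ ω) * g (ξ ω) ∂P
      = ∫ x, exp (p * x) * g x ∂(gaussianReal (μ * τ) v) := by
    rw [← hgauss]
    exact (integral_map hξ.aemeasurable
      ((Real.continuous_exp.comp (continuous_const.mul continuous_id)).mul
        hgmeas).aestronglyMeasurable).symm
  rw [hint]
  have hsplit : (fun x => exp (p * x) * g x)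
      = fun x => A * exp ((p + 1) * x) + (ρ - m * A) * exp (p * x) := by
    funext x
    rw [hg]
    simp only
    have : exp ((p + 1) * x) = exp (p * x) * exp x := by
      rw [← Real.exp_add]; ring_nf
    rw [this, hA]
    field_simp
    ring
  rw [hsplit, integral_add ((integrable_exp_mul_gaussianReal _ _ hv).const_mul A)
      ((integrable_exp_mul_gaussianReal _ _ hv).const_mul (ρ - m * A)),
    integral_const_mul, integral_const_mul,
    integral_exp_mul_gaussianReal _ _ hv, integral_exp_mul_gaussianReal _ _ hv, hvc]
  -- now pure algebra
  have hexp1 : exp (μ * τ * (p + 1) + σ ^ 2 * τ * (p + 1) ^ 2 / 2)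
      = exp (μ * τ * p + σ ^ 2 * τ * p ^ 2 / 2) * (m * exp (p * σ ^ 2 * τ)) := by
    rw [hm, ← Real.exp_add, ← Real.exp_add]; congr 1; ring
  rw [hexp1]
  have hAm : A * m = M₂ := by
    rw [hA, hM₂, hρm, hdD]
    field_simp
  have hB : ρ - m * A = M₁ := by
    rw [hA, hM₁, hρm, hdD, ← hρ]
    field_simp
    ring
  rw [← hAm, ← hB]
  ring
end

section
/- Let n ≥ 1 be an integer, μ, r ∈ ℝ, σ > 0, τ > 0, and let M₁, M₂ ∈ ℝ. Define G_n : (0,∞) → ℝ by G_n(x) = Σ_{k=0}^n C(n,k)·M₁^{n−k}·M₂^k·(1/(σ√(2πnτ)))·e^{−(ln x + nμτ + kσ²τ)²/(2nσ²τ)}. Then for every complex p, ∫₀^∞ x^{p−1}·G_n(x) dx = Σ_{k=0}^n C(n,k)·M₁^{n−k}·M₂^k·e^{−p·(nμτ + kσ²τ) + nσ²τ·p²/2}, and this equals (e^{−μτ·p + σ²τ·p²/2}·(M₁ + M₂·e^{−p·σ²τ}))^n. -/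
open MeasureTheory Real Set Finset

lemma subst_exp (g : ℝ → ℂ) :
    ∫ x in Ioi (0 : ℝ), g x = ∫ t : ℝ, Real.exp t • g (Real.exp t) := by
  have h := integral_image_eq_integral_abs_deriv_smul (s := (univ : Set ℝ))
    (f := Real.exp) (f' := Real.exp) MeasurableSet.univ
    (fun x _ => (Real.hasDerivAt_exp x).hasDerivWithinAt)
    (Real.exp_injective.injOn) g
  rw [image_univ, Real.range_exp] at h
  rw [h, Measure.restrict_univ]
  congr 1; funext t; rw [abs_of_pos (Real.exp_pos t)]

lemma cpow_exp (t : ℝ) (q : ℂ) :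
    ((Real.exp t : ℝ) : ℂ) ^ q = Complex.exp (q * t) := by
  rw [Complex.cpow_def_of_ne_zero (by exact_mod_cast (Real.exp_pos t).ne'),
    ← Complex.ofReal_log (Real.exp_pos t).le, Real.log_exp, mul_comm]

lemma gauss_integrable {A : ℝ} (hA : 0 < A) (a : ℝ) (p : ℂ) :
    Integrable (fun t : ℝ =>
      Complex.exp (p * t) * (Real.exp (-(t + a) ^ 2 / (2 * A)) : ℂ)) := by
  have heq : ∀ t : ℝ, Complex.exp (p * t) * (Real.exp (-(t + a) ^ 2 / (2 * A)) : ℂ)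
      = Complex.exp (((-(1 / (2 * A)) : ℝ) : ℂ) * t ^ 2
        + (p - ((a / A : ℝ) : ℂ)) * t + ((-(a ^ 2 / (2 * A)) : ℝ) : ℂ)) := by
    intro t
    rw [Complex.ofReal_exp, ← Complex.exp_add]
    congr 1
    push_cast
    field_simp
    ring
  simp_rw [heq]
  exact integrable_cexp_quadratic' (by simpa using by positivity) _ _

lemma gauss_mellin {A : ℝ} (hA : 0 < A) (a : ℝ) (p : ℂ) :
    ∫ t : ℝ, Complex.exp (p * t) * (Real.exp (-(t + a) ^ 2 / (2 * A)) : ℂ)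
      = (Real.sqrt (2 * π * A) : ℂ) * Complex.exp (-p * a + A * p ^ 2 / 2) := by
  have heq : ∀ t : ℝ, Complex.exp (p * t) * (Real.exp (-(t + a) ^ 2 / (2 * A)) : ℂ)
      = Complex.exp (((-(1 / (2 * A)) : ℝ) : ℂ) * t ^ 2
        + (p - ((a / A : ℝ) : ℂ)) * t + ((-(a ^ 2 / (2 * A)) : ℝ) : ℂ)) := by
    intro t
    rw [Complex.ofReal_exp, ← Complex.exp_add]
    congr 1
    push_cast
    field_simp
    ring
  simp_rw [heq]
  rw [integral_cexp_quadratic (by simpa using by positivity)]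
  congr 1
  · have h1 : (π : ℂ) / -((-(1 / (2 * A)) : ℝ) : ℂ) = ((2 * π * A : ℝ) : ℂ) := by
      push_cast
      field_simp
    rw [h1, show ((1:ℂ)/2) = ((1/2:ℝ):ℂ) by norm_num,
      ← Complex.ofReal_cpow (by positivity), Real.sqrt_eq_rpow]
  · congr 1
    have hA' : (A : ℂ) ≠ 0 := by exact_mod_cast hA.ne'
    push_cast
    field_simp
    ring

/-- The Green function `G_n` of the lognormal example is the inverse Mellin
transform of `L_n(p) = U(−p)^n`: its Mellin transform equals the binomial sum
`Σ_{k=0}^n C(n,k)·M₁^{n−k}·M₂^k·e^{−p(nμτ+kσ²τ)+nσ²τp²/2}`, which equals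
`(e^{−μτp + σ²τp²/2}·(M₁ + M₂·e^{−pσ²τ}))^n`. -/
theorem mellin_green_function (n : ℕ) (hn : 1 ≤ n) (μ r σ τ M₁ M₂ : ℝ)
    (hσ : 0 < σ) (hτ : 0 < τ)
    (G : ℝ → ℝ)
    (hG : G = fun x => ∑ k ∈ range (n + 1),
        (n.choose k : ℝ) * M₁ ^ (n - k) * M₂ ^ k *
          (1 / (σ * Real.sqrt (2 * π * n * τ))) *
            exp (-(Real.log x + n * μ * τ + k * σ ^ 2 * τ) ^ 2 /
              (2 * n * σ ^ 2 * τ))) :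
    ∀ p : ℂ,
      (∫ x in Ioi (0 : ℝ), (x : ℂ) ^ (p - 1) * (G x : ℂ))
          = (∑ k ∈ range (n + 1),
              (n.choose k : ℂ) * (M₁ : ℂ) ^ (n - k) * (M₂ : ℂ) ^ k *
                Complex.exp (-p * (n * μ * τ + k * σ ^ 2 * τ)
                  + n * σ ^ 2 * τ * p ^ 2 / 2)) ∧
        (∑ k ∈ range (n + 1),
              (n.choose k : ℂ) * (M₁ : ℂ) ^ (n - k) * (M₂ : ℂ) ^ k *
                Complex.exp (-p * (n * μ * τ + k * σ ^ 2 * τ)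
                  + n * σ ^ 2 * τ * p ^ 2 / 2))
          = (Complex.exp (-(μ * τ) * p + σ ^ 2 * τ * p ^ 2 / 2) *
              ((M₁ : ℂ) + (M₂ : ℂ) * Complex.exp (-p * (σ ^ 2 * τ)))) ^ n := by
  have hn0 : (0 : ℝ) < n := by exact_mod_cast hn
  set A : ℝ := ↑n * σ ^ 2 * τ with hAdef
  have hA : 0 < A := by positivity
  have hgarg : ∀ (t : ℝ) (k : ℕ),
      -(t + ↑n * μ * τ + ↑k * σ ^ 2 * τ) ^ 2 / (2 * ↑n * σ ^ 2 * τ)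
        = -(t + (↑n * μ * τ + ↑k * σ ^ 2 * τ)) ^ 2 / (2 * A) := by
    intro t k; rw [hAdef]; ring
  intro p
  constructor
  · rw [subst_exp]
    have key : (fun t : ℝ => Real.exp t •
          (((Real.exp t : ℝ) : ℂ) ^ (p - 1) * (G (Real.exp t) : ℂ)))
        = fun t : ℝ => ∑ k ∈ range (n + 1),
            ((n.choose k : ℂ) * (M₁ : ℂ) ^ (n - k) * (M₂ : ℂ) ^ k *
              (1 / ((σ : ℂ) * (Real.sqrt (2 * π * n * τ) : ℂ)))) *
            (Complex.exp (p * t) *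
              (Real.exp (-(t + (↑n * μ * τ + ↑k * σ ^ 2 * τ)) ^ 2 / (2 * A)) : ℂ)) := by
      funext t
      conv_lhs => rw [hG]
      simp only [Real.log_exp, hgarg]
      rw [cpow_exp, Complex.real_smul]
      push_cast
      rw [Finset.mul_sum, Finset.mul_sum]
      refine Finset.sum_congr rfl fun k _ => ?_
      have hexp : Complex.exp (t : ℂ) * Complex.exp ((p - 1) * t) = Complex.exp (p * t) := by
        rw [← Complex.exp_add]; congr 1; ring
      rw [← hexp]
      ring
    rw [key, integral_finset_sum _ (fun k _ => ((gauss_integrable hA _ p).const_mul _))]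
    refine Finset.sum_congr rfl fun k _ => ?_
    rw [MeasureTheory.integral_const_mul, gauss_mellin hA]
    have hs : Real.sqrt (2 * π * A) = σ * Real.sqrt (2 * π * n * τ) := by
      rw [show 2 * π * A = σ ^ 2 * (2 * π * n * τ) by rw [hAdef]; ring,
        Real.sqrt_mul (sq_nonneg σ), Real.sqrt_sq hσ.le]
    have harg2 : (-p * ((↑n * μ * τ + ↑k * σ ^ 2 * τ : ℝ) : ℂ) + (A : ℂ) * p ^ 2 / 2)
        = -p * ((n : ℂ) * μ * τ + (k : ℂ) * σ ^ 2 * τ) + (n : ℂ) * σ ^ 2 * τ * p ^ 2 / 2 := by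
      push_cast [hAdef]; ring
    have h1 : (σ : ℂ) ≠ 0 := by exact_mod_cast hσ.ne'
    have h2 : ((Real.sqrt (2 * π * n * τ) : ℝ) : ℂ) ≠ 0 := by
      exact_mod_cast (Real.sqrt_pos.mpr (by positivity)).ne'
    have hprod : ((σ : ℂ) * ((Real.sqrt (2 * π * n * τ) : ℝ) : ℂ)) ≠ 0 := mul_ne_zero h1 h2
    rw [hs, harg2, Complex.ofReal_mul]
    have hone : (1 : ℂ) / ((σ : ℂ) * ((Real.sqrt (2 * π * n * τ) : ℝ) : ℂ))
        * ((σ : ℂ) * ((Real.sqrt (2 * π * n * τ) : ℝ) : ℂ)) = 1 := one_div_mul_cancel hprod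
    linear_combination ((n.choose k : ℂ) * (M₁ : ℂ) ^ (n - k) * (M₂ : ℂ) ^ k *
      Complex.exp (-p * ((n : ℂ) * μ * τ + (k : ℂ) * σ ^ 2 * τ)
        + (n : ℂ) * σ ^ 2 * τ * p ^ 2 / 2)) * hone
  · rw [mul_pow, show (M₁ : ℂ) + (M₂ : ℂ) * Complex.exp (-p * (σ ^ 2 * τ))
        = (M₂ : ℂ) * Complex.exp (-p * (σ ^ 2 * τ)) + (M₁ : ℂ) from add_comm _ _,
      add_pow, Finset.mul_sum]
    refine Finset.sum_congr rfl fun k hk => ?_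
    rw [mul_pow, ← Complex.exp_nat_mul, ← Complex.exp_nat_mul]
    rw [show Complex.exp (↑n * (-(↑μ * ↑τ) * p + ↑σ ^ 2 * ↑τ * p ^ 2 / 2)) *
        ((↑M₂ ^ k * Complex.exp (↑k * (-p * (↑σ ^ 2 * ↑τ)))) * ↑M₁ ^ (n - k) * ↑(n.choose k))
      = ↑(n.choose k) * ↑M₁ ^ (n - k) * ↑M₂ ^ k *
        (Complex.exp (↑n * (-(↑μ * ↑τ) * p + ↑σ ^ 2 * ↑τ * p ^ 2 / 2)) *
          Complex.exp (↑k * (-p * (↑σ ^ 2 * ↑τ)))) from by ring, ← Complex.exp_add]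
    congr 1
    ring
end
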